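/- Let C be a v×v real symmetric positive semidefinite matrix, let Q be a v×s real matrix whose column space is contained in the column space of C, let d be the rank of Q, and let K be a v×d real matrix of rank d with K Kᵀ = Q Qᵀ. Then the s×s matrix N = (Qᵀ C⁺ Q)⁺ and the d×d matrix M = (Kᵀ C⁺ K)^{−1} have the same nonzero eigenvalues including multiplicities; that is, for every real λ ≠ 0, the dimension of the kernel of N − λ·I_s equals the dimension of the kernel of M − λ·I_d. -/

import Mathlib

open Matrix

/-- The column space of a real matrix. -/
def colSpace {m n : ℕ} (A : Matrix (Fin m) (Fin n) ℝ) : Submodule ℝ (Fin m → ℝ) :=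
  LinearMap.range A.mulVecLin

/-- `B` is the Moore–Penrose pseudoinverse of `A`. -/
def IsMPInv {m n : ℕ} (A : Matrix (Fin m) (Fin n) ℝ) (B : Matrix (Fin n) (Fin m) ℝ) : Prop :=
  A * B * A = A ∧ B * A * B = B ∧ (A * B)ᵀ = A * B ∧ (B * A)ᵀ = B * A

/-- Over ℝ, `B * Bᵀ = 0` implies `B = 0`. -/
lemma aux_mul_transpose_self_eq_zero {m n : ℕ} {B : Matrix (Fin m) (Fin n) ℝ}
    (h : B * Bᵀ = 0) : B = 0 := by
  ext i j
  have hd : (B * Bᵀ) i i = 0 := by rw [h]; rfl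
  rw [Matrix.mul_apply] at hd
  simp only [Matrix.transpose_apply] at hd
  have := (Finset.sum_eq_zero_iff_of_nonneg
      (fun k _ => mul_self_nonneg (B i k))).mp hd j (Finset.mem_univ j)
  simpa [mul_self_eq_zero] using this

/-- Uniqueness of the Moore–Penrose pseudoinverse. -/
lemma aux_mpinv_unique {m n : ℕ} {A : Matrix (Fin m) (Fin n) ℝ}
    {B1 B2 : Matrix (Fin n) (Fin m) ℝ}
    (h1 : IsMPInv A B1) (h2 : IsMPInv A B2) : B1 = B2 := by
  obtain ⟨a1, b1, c1, d1⟩ := h1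
  obtain ⟨a2, b2, c2, d2⟩ := h2
  have hAt2 : Aᵀ = Aᵀ * (A * B2) := by
    conv_lhs => rw [← a2]
    rw [Matrix.transpose_mul, c2]
  have hAt : Aᵀ = (B2 * A) * Aᵀ := by
    conv_lhs => rw [← a2]
    rw [Matrix.mul_assoc, Matrix.transpose_mul, d2]
  have hAB : A * B1 = A * B2 := by
    calc A * B1 = (A * B1)ᵀ := c1.symm
      _ = B1ᵀ * Aᵀ := Matrix.transpose_mul _ _
      _ = B1ᵀ * (Aᵀ * (A * B2)) := by rw [← hAt2]
      _ = (B1ᵀ * Aᵀ) * (A * B2) := by rw [Matrix.mul_assoc]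
      _ = (A * B1)ᵀ * (A * B2) := by rw [Matrix.transpose_mul]
      _ = (A * B1) * (A * B2) := by rw [c1]
      _ = (A * B1 * A) * B2 := by simp only [Matrix.mul_assoc]
      _ = A * B2 := by rw [a1]
  have hBA : B1 * A = B2 * A := by
    calc B1 * A = (B1 * A)ᵀ := d1.symm
      _ = Aᵀ * B1ᵀ := Matrix.transpose_mul _ _
      _ = ((B2 * A) * Aᵀ) * B1ᵀ := by rw [← hAt]
      _ = (B2 * A) * (Aᵀ * B1ᵀ) := by rw [Matrix.mul_assoc]
      _ = (B2 * A) * (B1 * A)ᵀ := by rw [Matrix.transpose_mul]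
      _ = (B2 * A) * (B1 * A) := by rw [d1]
      _ = B2 * (A * B1 * A) := by simp only [Matrix.mul_assoc]
      _ = B2 * A := by rw [a1]
  calc B1 = B1 * A * B1 := b1.symm
    _ = B2 * A * B1 := by rw [hBA]
    _ = B2 * (A * B1) := Matrix.mul_assoc _ _ _
    _ = B2 * (A * B2) := by rw [hAB]
    _ = B2 * A * B2 := (Matrix.mul_assoc _ _ _).symm
    _ = B2 := b2

/-- If `A * Aᵀ = B * Bᵀ` and `P * A = A`, then `P * B = B`. -/
lemma aux_proj {v a b : ℕ} (P : Matrix (Fin v) (Fin v) ℝ)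
    (A : Matrix (Fin v) (Fin a) ℝ) (B : Matrix (Fin v) (Fin b) ℝ)
    (hAB : A * Aᵀ = B * Bᵀ) (hPA : P * A = A) : P * B = B := by
  have h1 : (1 - P) * A = 0 := by rw [Matrix.sub_mul, Matrix.one_mul, hPA, sub_self]
  have h2 : ((1 - P) * B) * ((1 - P) * B)ᵀ = 0 := by
    calc ((1 - P) * B) * ((1 - P) * B)ᵀ
        = (1 - P) * (B * Bᵀ) * (1 - P)ᵀ := by
          simp only [Matrix.transpose_mul, Matrix.mul_assoc]
      _ = (1 - P) * (A * Aᵀ) * (1 - P)ᵀ := by rw [hAB]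
      _ = ((1 - P) * A) * (Aᵀ * (1 - P)ᵀ) := by simp only [Matrix.mul_assoc]
      _ = 0 := by rw [h1, Matrix.zero_mul]
  have h3 : (1 - P) * B = 0 := aux_mul_transpose_self_eq_zero h2
  rw [Matrix.sub_mul, Matrix.one_mul, sub_eq_zero] at h3
  exact h3.symm

theorem stmt5 (v s d : ℕ) (C : Matrix (Fin v) (Fin v) ℝ) (hC : C.PosSemidef)
    (Q : Matrix (Fin v) (Fin s) ℝ) (hQcol : colSpace Q ≤ colSpace C) (hQrank : Q.rank = d)
    (K : Matrix (Fin v) (Fin d) ℝ) (hKrank : K.rank = d) (hKW : K * Kᵀ = Q * Qᵀ)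
    (Cp : Matrix (Fin v) (Fin v) ℝ) (hCp : IsMPInv C Cp)
    (N : Matrix (Fin s) (Fin s) ℝ) (hN : IsMPInv (Qᵀ * Cp * Q) N) :
    ∀ μ : ℝ, μ ≠ 0 →
      Module.finrank ℝ (LinearMap.ker ((N - μ • 1).mulVecLin)) =
        Module.finrank ℝ (LinearMap.ker (((Kᵀ * Cp * K)⁻¹ - μ • 1).mulVecLin)) := by
  intro μ hμ
  classical
  obtain ⟨a1, b1, c1, d1⟩ := hCp
  have hCsym : Cᵀ = C := by
    have := hC.1
    rwa [Matrix.IsHermitian, Matrix.conjTranspose_eq_transpose_of_trivial] at this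
  -- Cp is symmetric
  have hCpT : IsMPInv C Cpᵀ := by
    refine ⟨?_, ?_, ?_, ?_⟩
    · calc C * Cpᵀ * C = Cᵀ * Cpᵀ * Cᵀ := by rw [hCsym]
        _ = (C * (Cp * C))ᵀ := by
            simp only [Matrix.transpose_mul, Matrix.mul_assoc]
        _ = Cᵀ := by rw [← Matrix.mul_assoc, a1]
        _ = C := hCsym
    · calc Cpᵀ * C * Cpᵀ = Cpᵀ * Cᵀ * Cpᵀ := by rw [hCsym]
        _ = (Cp * (C * Cp))ᵀ := by
            simp only [Matrix.transpose_mul, Matrix.mul_assoc]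
        _ = Cpᵀ := by rw [← Matrix.mul_assoc, b1]
    · calc (C * Cpᵀ)ᵀ = Cp * Cᵀ := by rw [Matrix.transpose_mul, Matrix.transpose_transpose]
        _ = Cp * C := by rw [hCsym]
        _ = (Cp * C)ᵀ := d1.symm
        _ = Cᵀ * Cpᵀ := Matrix.transpose_mul _ _
        _ = C * Cpᵀ := by rw [hCsym]
    · calc (Cpᵀ * C)ᵀ = Cᵀ * Cp := by rw [Matrix.transpose_mul, Matrix.transpose_transpose]
        _ = C * Cp := by rw [hCsym]
        _ = (C * Cp)ᵀ := c1.symm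
        _ = Cpᵀ * Cᵀ := Matrix.transpose_mul _ _
        _ = Cpᵀ * C := by rw [hCsym]
  have hCpsym : Cpᵀ = Cp := aux_mpinv_unique hCpT ⟨a1, b1, c1, d1⟩
  -- Cp is positive semidefinite
  have hCpPSD : Cp.PosSemidef := by
    have h := hC.mul_mul_conjTranspose_same Cp
    rwa [Matrix.conjTranspose_eq_transpose_of_trivial, hCpsym, b1] at h
  -- K has injective mulVecLin
  have hKinj : Function.Injective K.mulVecLin := by
    rw [← LinearMap.ker_eq_bot]
    have h := LinearMap.finrank_range_add_finrank_ker K.mulVecLin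
    rw [Module.finrank_fin_fun] at h
    rw [Matrix.rank] at hKrank
    rw [hKrank] at h
    have : Module.finrank ℝ (LinearMap.ker K.mulVecLin) = 0 := by omega
    exact Submodule.finrank_eq_zero.mp this
  -- C * Cp * Q = Q
  have hPQ : (C * Cp) * Q = Q := by
    apply Matrix.toLin'.injective
    apply LinearMap.ext
    intro x
    simp only [Matrix.toLin'_apply]
    obtain ⟨z, hz⟩ := hQcol (LinearMap.mem_range_self Q.mulVecLin x)
    simp only [Matrix.mulVecLin_apply] at hz
    calc (C * Cp * Q) *ᵥ x = (C * Cp) *ᵥ (Q *ᵥ x) := (Matrix.mulVec_mulVec _ _ _).symm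
      _ = (C * Cp) *ᵥ (C *ᵥ z) := by rw [hz]
      _ = (C * Cp * C) *ᵥ z := Matrix.mulVec_mulVec _ _ _
      _ = Q *ᵥ x := by rw [a1, hz]
  -- C * Cp * K = K
  have hPK : (C * Cp) * K = K := aux_proj (C * Cp) Q K hKW.symm hPQ
  -- the quadratic form identity
  have hquad : ∀ (B : Matrix (Fin v) (Fin v) ℝ) (W : Matrix (Fin v) (Fin d) ℝ)
      (x : Fin d → ℝ), x ⬝ᵥ ((Wᵀ * B * W) *ᵥ x) = (W *ᵥ x) ⬝ᵥ (B *ᵥ (W *ᵥ x)) := by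
    intro B W x
    rw [← Matrix.mulVec_mulVec, ← Matrix.mulVec_mulVec, Matrix.dotProduct_mulVec,
      Matrix.vecMul_transpose, Matrix.mulVec_mulVec]
  -- A := Kᵀ * Cp * K is positive definite
  have hApd : (Kᵀ * Cp * K).PosDef := by
    rw [Matrix.posDef_iff_dotProduct_mulVec]
    constructor
    · rw [Matrix.IsHermitian, Matrix.conjTranspose_eq_transpose_of_trivial]
      calc (Kᵀ * Cp * K)ᵀ = Kᵀ * (Cpᵀ * K) := by
            simp only [Matrix.transpose_mul, Matrix.transpose_transpose, Matrix.mul_assoc]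
        _ = Kᵀ * Cp * K := by rw [hCpsym, Matrix.mul_assoc]
    · intro x hx
      simp only [star_trivial]
      rw [hquad]
      have hle : 0 ≤ (K *ᵥ x) ⬝ᵥ (Cp *ᵥ (K *ᵥ x)) := by
        have := hCpPSD.dotProduct_mulVec_nonneg (K *ᵥ x)
        simpa only [star_trivial] using this
      rcases lt_or_eq_of_le hle with h | h
      · exact h
      · exfalso
        have hz : Cp *ᵥ (K *ᵥ x) = 0 := by
          exact (hCpPSD.dotProduct_mulVec_zero_iff (K *ᵥ x)).mp
            (by simpa only [star_trivial] using h.symm)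
        have hKx : K *ᵥ x = 0 := by
          have : (C * Cp * K) *ᵥ x = K *ᵥ x := by rw [hPK]
          rw [← this, ← Matrix.mulVec_mulVec, ← Matrix.mulVec_mulVec, hz, Matrix.mulVec_zero]
        exact hx (hKinj (by simpa [Matrix.mulVecLin_apply] using hKx))
  set A : Matrix (Fin d) (Fin d) ℝ := Kᵀ * Cp * K with hAdef
  have hAdet : IsUnit A.det := (Matrix.isUnit_iff_isUnit_det A).mp hApd.isUnit
  set M : Matrix (Fin d) (Fin d) ℝ := A⁻¹ with hMdef
  have hAM : A * M = 1 := Matrix.mul_nonsing_inv A hAdet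
  have hMA : M * A = 1 := Matrix.nonsing_inv_mul A hAdet
  have hAsym : Aᵀ = A := by
    have := hApd.1
    rwa [Matrix.IsHermitian, Matrix.conjTranspose_eq_transpose_of_trivial] at this
  have hMsym : Mᵀ = M := by
    rw [hMdef, Matrix.transpose_nonsing_inv, hAsym]
  -- G := Kᵀ * K is positive definite
  have hGpd : (Kᵀ * K).PosDef := by
    rw [Matrix.posDef_iff_dotProduct_mulVec]
    constructor
    · rw [Matrix.IsHermitian, Matrix.conjTranspose_eq_transpose_of_trivial,
        Matrix.transpose_mul, Matrix.transpose_transpose]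
    · intro x hx
      simp only [star_trivial]
      have : x ⬝ᵥ ((Kᵀ * K) *ᵥ x) = (K *ᵥ x) ⬝ᵥ (K *ᵥ x) := by
        rw [← Matrix.mulVec_mulVec, Matrix.dotProduct_mulVec, Matrix.vecMul_transpose]
      rw [this]
      have hKx : K *ᵥ x ≠ 0 := fun h =>
        hx (hKinj (by simpa [Matrix.mulVecLin_apply] using h))
      have h0 : (0:ℝ) ≤ (K *ᵥ x) ⬝ᵥ (K *ᵥ x) :=
        Finset.sum_nonneg fun i _ => mul_self_nonneg _
      exact lt_of_le_of_ne h0 fun h =>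
        hKx (dotProduct_self_eq_zero.mp h.symm)
  -- G and its inverse
  set G : Matrix (Fin d) (Fin d) ℝ := Kᵀ * K with hGdef
  have hGdet : IsUnit G.det := (Matrix.isUnit_iff_isUnit_det G).mp hGpd.isUnit
  have hGG : G * G⁻¹ = 1 := Matrix.mul_nonsing_inv G hGdet
  have hGG' : G⁻¹ * G = 1 := Matrix.nonsing_inv_mul G hGdet
  have hGsym : Gᵀ = G := by
    rw [hGdef, Matrix.transpose_mul, Matrix.transpose_transpose]
  have hGisym : (G⁻¹)ᵀ = G⁻¹ := by rw [Matrix.transpose_nonsing_inv, hGsym]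
  -- X with Q = K * X and X * Xᵀ = 1
  set X : Matrix (Fin d) (Fin s) ℝ := G⁻¹ * Kᵀ * Q with hXdef
  have hPK' : (K * G⁻¹ * Kᵀ) * K = K := by
    calc (K * G⁻¹ * Kᵀ) * K = K * (G⁻¹ * G) := by
          rw [hGdef]; simp only [Matrix.mul_assoc]
      _ = K := by rw [hGG', Matrix.mul_one]
  have hKX : K * X = Q := by
    have := aux_proj (K * G⁻¹ * Kᵀ) K Q hKW hPK'
    calc K * X = (K * G⁻¹ * Kᵀ) * Q := by rw [hXdef]; simp only [Matrix.mul_assoc]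
      _ = Q := this
  have hXXT : X * Xᵀ = 1 := by
    have hQQT : Q * Qᵀ = K * Kᵀ := hKW.symm
    calc X * Xᵀ = G⁻¹ * Kᵀ * (Q * Qᵀ) * (K * G⁻¹) := by
          rw [hXdef]
          simp only [Matrix.transpose_mul, Matrix.transpose_transpose, hGisym,
            Matrix.mul_assoc]
      _ = G⁻¹ * ((Kᵀ * K) * (Kᵀ * K)) * G⁻¹ := by
          rw [hQQT]; simp only [Matrix.mul_assoc]
      _ = G⁻¹ * (G * G) * G⁻¹ := by rw [hGdef]
      _ = (G⁻¹ * G) * (G * G⁻¹) := by simp only [Matrix.mul_assoc]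
      _ = 1 := by rw [hGG, hGG', Matrix.one_mul]
  -- rewriting helpers
  have hX' : ∀ (k : ℕ) (Z : Matrix (Fin d) (Fin k) ℝ), X * (Xᵀ * Z) = Z := by
    intro k Z; rw [← Matrix.mul_assoc, hXXT, Matrix.one_mul]
  have hAM' : ∀ (k : ℕ) (Z : Matrix (Fin d) (Fin k) ℝ), A * (M * Z) = Z := by
    intro k Z; rw [← Matrix.mul_assoc, hAM, Matrix.one_mul]
  have hMA' : ∀ (k : ℕ) (Z : Matrix (Fin d) (Fin k) ℝ), M * (A * Z) = Z := by
    intro k Z; rw [← Matrix.mul_assoc, hMA, Matrix.one_mul]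
  -- Qᵀ * Cp * Q = Xᵀ * A * X
  have hQCQ : Qᵀ * Cp * Q = Xᵀ * A * X := by
    rw [← hKX, hAdef]
    simp only [Matrix.transpose_mul, Matrix.mul_assoc]
  -- N = Xᵀ * M * X
  have hNMP : IsMPInv (Qᵀ * Cp * Q) (Xᵀ * M * X) := by
    rw [hQCQ]
    refine ⟨?_, ?_, ?_, ?_⟩
    · simp only [Matrix.mul_assoc, hX', hAM', hMA']
    · simp only [Matrix.mul_assoc, hX', hAM', hMA']
    · simp only [Matrix.transpose_mul, Matrix.transpose_transpose, hMsym, hAsym,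
        Matrix.mul_assoc, hX', hAM', hMA']
    · simp only [Matrix.transpose_mul, Matrix.transpose_transpose, hMsym, hAsym,
        Matrix.mul_assoc, hX', hAM', hMA']
  have hNval : N = Xᵀ * M * X := aux_mpinv_unique hN hNMP
  -- key matrix identities
  have hXN : X * N = M * X := by
    rw [hNval]
    calc X * (Xᵀ * M * X) = X * (Xᵀ * (M * X)) := by simp only [Matrix.mul_assoc]
      _ = M * X := hX' _ _
  have hNXT : N * Xᵀ = Xᵀ * M := by
    rw [hNval]
    calc Xᵀ * M * X * Xᵀ = Xᵀ * (M * (X * Xᵀ)) := by simp only [Matrix.mul_assoc]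
      _ = Xᵀ * M := by rw [hXXT, Matrix.mul_one]
  have hXTXN : Xᵀ * X * N = N := by
    rw [hNval]
    calc Xᵀ * X * (Xᵀ * M * X) = Xᵀ * (X * (Xᵀ * (M * X))) := by
          simp only [Matrix.mul_assoc]
      _ = Xᵀ * (M * X) := by rw [hX']
      _ = Xᵀ * M * X := by rw [Matrix.mul_assoc]
  -- kernel membership characterizations
  have mem1 : ∀ u : Fin s → ℝ, u ∈ LinearMap.ker (N - μ • 1).mulVecLin ↔ N *ᵥ u = μ • u := by
    intro u
    rw [LinearMap.mem_ker, Matrix.mulVecLin_apply, Matrix.sub_mulVec, sub_eq_zero,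
      Matrix.smul_mulVec, Matrix.one_mulVec]
  have mem2 : ∀ w : Fin d → ℝ, w ∈ LinearMap.ker ((M - μ • 1).mulVecLin) ↔ M *ᵥ w = μ • w := by
    intro w
    rw [LinearMap.mem_ker, Matrix.mulVecLin_apply, Matrix.sub_mulVec, sub_eq_zero,
      Matrix.smul_mulVec, Matrix.one_mulVec]
  -- the linear maps between the kernels
  have hFmem : ∀ u : LinearMap.ker (N - μ • 1).mulVecLin,
      X.mulVecLin ((LinearMap.ker (N - μ • 1).mulVecLin).subtype u) ∈
        LinearMap.ker ((M - μ • 1).mulVecLin) := by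
    rintro ⟨u, hu⟩
    rw [mem1] at hu
    rw [mem2]
    simp only [Submodule.subtype_apply, Matrix.mulVecLin_apply]
    calc M *ᵥ (X *ᵥ u) = (M * X) *ᵥ u := Matrix.mulVec_mulVec _ _ _
      _ = (X * N) *ᵥ u := by rw [hXN]
      _ = X *ᵥ (N *ᵥ u) := (Matrix.mulVec_mulVec _ _ _).symm
      _ = X *ᵥ (μ • u) := by rw [hu]
      _ = μ • (X *ᵥ u) := Matrix.mulVec_smul _ _ _
  have hGmem : ∀ w : LinearMap.ker ((M - μ • 1).mulVecLin),
      Xᵀ.mulVecLin ((LinearMap.ker ((M - μ • 1).mulVecLin)).subtype w) ∈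
        LinearMap.ker (N - μ • 1).mulVecLin := by
    rintro ⟨w, hw⟩
    rw [mem2] at hw
    rw [mem1]
    simp only [Submodule.subtype_apply, Matrix.mulVecLin_apply]
    calc N *ᵥ (Xᵀ *ᵥ w) = (N * Xᵀ) *ᵥ w := Matrix.mulVec_mulVec _ _ _
      _ = (Xᵀ * M) *ᵥ w := by rw [hNXT]
      _ = Xᵀ *ᵥ (M *ᵥ w) := (Matrix.mulVec_mulVec _ _ _).symm
      _ = Xᵀ *ᵥ (μ • w) := by rw [hw]
      _ = μ • (Xᵀ *ᵥ w) := Matrix.mulVec_smul _ _ _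
  let F : LinearMap.ker (N - μ • 1).mulVecLin →ₗ[ℝ] LinearMap.ker ((M - μ • 1).mulVecLin) :=
    LinearMap.codRestrict _ (X.mulVecLin.comp (LinearMap.ker (N - μ • 1).mulVecLin).subtype)
      hFmem
  let Gm : LinearMap.ker ((M - μ • 1).mulVecLin) →ₗ[ℝ] LinearMap.ker (N - μ • 1).mulVecLin :=
    LinearMap.codRestrict _ (Xᵀ.mulVecLin.comp (LinearMap.ker ((M - μ • 1).mulVecLin)).subtype)
      hGmem
  have hGF : Gm.comp F = LinearMap.id := by
    apply LinearMap.ext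
    rintro ⟨u, hu⟩
    apply Subtype.ext
    rw [mem1] at hu
    simp only [F, Gm, LinearMap.comp_apply, LinearMap.codRestrict_apply,
      Submodule.subtype_apply, Matrix.mulVecLin_apply, LinearMap.id_apply]
    have h1 : Xᵀ *ᵥ (X *ᵥ u) = (Xᵀ * X) *ᵥ u := Matrix.mulVec_mulVec _ _ _
    have h2 : (Xᵀ * X) *ᵥ (N *ᵥ u) = N *ᵥ u := by
      rw [Matrix.mulVec_mulVec, hXTXN]
    rw [h1]
    have h3 : (Xᵀ * X) *ᵥ (μ • u) = μ • u := by rw [← hu]; exact h2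
    have h4 : μ • ((Xᵀ * X) *ᵥ u) = μ • u := by
      rw [← Matrix.mulVec_smul]; exact h3
    have := smul_right_injective (Fin s → ℝ) hμ h4
    exact this
  have hFG : F.comp Gm = LinearMap.id := by
    apply LinearMap.ext
    rintro ⟨w, hw⟩
    apply Subtype.ext
    simp only [F, Gm, LinearMap.comp_apply, LinearMap.codRestrict_apply,
      Submodule.subtype_apply, Matrix.mulVecLin_apply, LinearMap.id_apply]
    rw [Matrix.mulVec_mulVec, hXXT, Matrix.one_mulVec]
  exact LinearEquiv.finrank_eq (LinearEquiv.ofLinear F Gm hFG hGF)
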